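/- If (a_n) is a nondecreasing sequence of positive integers with a_1 = 1 and a_n ≤ 2·a_{n-1} for all n ≥ 2, then (a_n) is complete, i.e., every positive integer is a sum of distinct terms of the sequence. -/

import Mathlib

/-- A sequence of positive integers (indexed from 1) is complete if every positive
integer is a sum of distinct terms (each index used at most once). -/
def SeqComplete (a : ℕ → ℕ) : Prop :=
  ∀ N : ℕ, 0 < N → ∃ s : Finset ℕ, (∀ i ∈ s, 1 ≤ i) ∧ ∑ i ∈ s, a i = N

/-- `H` is the positive linear recurrence sequence (PLRS) with coefficients
`c 1, …, c L` (indexed from 1). -/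
def IsPLRS (L : ℕ) (c : ℕ → ℕ) (H : ℕ → ℕ) : Prop :=
  H 1 = 1 ∧
  (∀ n, 1 ≤ n → n < L → H (n + 1) = (∑ i ∈ Finset.Icc 1 n, c i * H (n + 1 - i)) + 1) ∧
  (∀ n, L ≤ n → H (n + 1) = ∑ i ∈ Finset.Icc 1 L, c i * H (n + 1 - i))

theorem doubling_criterion (a : ℕ → ℕ)
    (hpos : ∀ n, 1 ≤ n → 0 < a n)
    (hmono : ∀ n, 1 ≤ n → a n ≤ a (n + 1))
    (h1 : a 1 = 1)
    (hdouble : ∀ n, 2 ≤ n → a n ≤ 2 * a (n - 1)) :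
    SeqComplete a := by
  set S : ℕ → ℕ := fun n => ∑ i ∈ Finset.Icc 1 n, a i with hS
  -- Key bound: a (n+1) ≤ S n + 1
  have hbound : ∀ n : ℕ, a (n + 1) ≤ S n + 1 := by
    intro n
    induction n with
    | zero => simp [hS, h1]
    | succ k ih =>
      show a (k + 2) ≤ S (k + 1) + 1
      have h2 : a (k + 2) ≤ 2 * a (k + 1) := by
        have := hdouble (k + 2) (by omega)
        simpa using this
      have hSk : S (k + 1) = S k + a (k + 1) := by
        simp [hS, Finset.sum_Icc_succ_top (by omega : 1 ≤ k + 1)]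
      omega
  -- Main lemma: every N ≤ S n is a sum over a subset of Icc 1 n
  have main : ∀ n : ℕ, ∀ N : ℕ, N ≤ S n →
      ∃ s : Finset ℕ, s ⊆ Finset.Icc 1 n ∧ ∑ i ∈ s, a i = N := by
    intro n
    induction n with
    | zero =>
      intro N hN
      simp [hS] at hN
      exact ⟨∅, by simp, by simp [hN]⟩
    | succ k ih =>
      intro N hN
      have hSk : S (k + 1) = S k + a (k + 1) := by
        simp [hS, Finset.sum_Icc_succ_top (by omega : 1 ≤ k + 1)]
      by_cases h : N ≤ S k
      · obtain ⟨s, hs, hsum⟩ := ih N h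
        exact ⟨s, hs.trans (Finset.Icc_subset_Icc_right (by omega)), hsum⟩
      · push_neg at h
        have hle : a (k + 1) ≤ N := by have := hbound k; omega
        obtain ⟨s, hs, hsum⟩ := ih (N - a (k + 1)) (by omega)
        have hnot : k + 1 ∉ s := by
          intro hmem
          have := hs hmem
          simp [Finset.mem_Icc] at this
        refine ⟨insert (k + 1) s, ?_, ?_⟩
        · intro x hx
          rcases Finset.mem_insert.mp hx with rfl | hx
          · simp
          · have := hs hx
            simp [Finset.mem_Icc] at this ⊢
            omega
        · rw [Finset.sum_insert hnot, hsum]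
          omega
  intro N hN
  have hSN : N ≤ S N := by
    calc N = ∑ i ∈ Finset.Icc 1 N, 1 := by simp
      _ ≤ S N := Finset.sum_le_sum fun i hi => hpos i (Finset.mem_Icc.mp hi).1
  obtain ⟨s, hs, hsum⟩ := main N N hSN
  exact ⟨s, fun i hi => (Finset.mem_Icc.mp (hs hi)).1, hsum⟩
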